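/- Fix p ∈ (0,1), s ∈ (0,1), ε ∈ (0, 1/2), c > 0 and δ > 0. There exists C > 0 such that for all sufficiently large r, with a = r^{p−1}, the following holds: if x ∈ ℝ^K satisfies x_k ≥ c·r^{s−1} for all k ∈ K and |Σ_{k∈K} k_i x_k − ρ_i| ≤ r^{−1/2+ε}/|I| for all i ∈ I, and if |χ_{k,k',i}(x)| ≥ δ for at least one pair of edges (k,i), (k',i) ∈ M, then Ξ(x) ≤ −C·r^{2(s−1)}/log r; in particular, for all sufficiently large r, Ξ(x) < −r^{2s−2−ε}. -/

import Mathlib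

open Finset

/-- The coordinates of `x` extended by the convention `x_0 = a`. -/
def xeDef {I : Type*} [Fintype I]
    (a : ℝ) (x : (I → ℕ) → ℝ) (m : I → ℕ) : ℝ :=
  if m = 0 then a else x m

/-- `x_{(i)} = a + ∑_{k ∈ K : k + e_i ∈ K} x_k`. -/
noncomputable def xIdxDef {I : Type*} [Fintype I] [DecidableEq I]
    (Kbar : Finset (I → ℕ)) (a : ℝ) (x : (I → ℕ) → ℝ) (i : I) : ℝ :=
  a + ∑ m ∈ (Kbar.erase 0).filter (fun m => m + Pi.single i 1 ∈ Kbar.erase 0), x m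

/-- `χ_{k,k',i}(x)`, with the convention `x_0 = a`. -/
noncomputable def chiDef {I : Type*} [Fintype I] [DecidableEq I]
    (a : ℝ) (x : (I → ℕ) → ℝ) (k k' : I → ℕ) (i : I) : ℝ :=
  Real.log ((k' i : ℝ) * xeDef a x (k - Pi.single i 1) * xeDef a x k')
    - Real.log ((k i : ℝ) * xeDef a x k * xeDef a x (k' - Pi.single i 1))

/-- `ξ_{k,k',i}(x) = (1/b)·χ_{k,k',i}(x)·k_i μ_i x_k x_{k'−e_i}/x_{(i)}`, `b = −log a`. -/
noncomputable def xiDef {I : Type*} [Fintype I] [DecidableEq I]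
    (Kbar : Finset (I → ℕ)) (μ : I → ℝ) (a : ℝ) (x : (I → ℕ) → ℝ)
    (k k' : I → ℕ) (i : I) : ℝ :=
  (1 / (-Real.log a)) * chiDef a x k k' i *
    ((k i : ℝ) * μ i * xeDef a x k * xeDef a x (k' - Pi.single i 1)) / xIdxDef Kbar a x i

/-- The set of configurations `k` such that `(k, i)` is an edge. -/
def edgesF {I : Type*} [Fintype I] [DecidableEq I]
    (Kbar : Finset (I → ℕ)) (i : I) : Finset (I → ℕ) :=
  (Kbar.erase 0).filter (fun k => 1 ≤ k i ∧ k - Pi.single i 1 ∈ Kbar)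

/-- `Ξ(x)` as the full double sum over ordered pairs of edges. -/
noncomputable def XiDef {I : Type*} [Fintype I] [DecidableEq I]
    (Kbar : Finset (I → ℕ)) (μ : I → ℝ) (a : ℝ) (x : (I → ℕ) → ℝ) : ℝ :=
  ∑ i : I, ∑ k ∈ edgesF Kbar i, ∑ k' ∈ edgesF Kbar i, xiDef Kbar μ a x k k' i


lemma sum_le_of_mem' {α : Type*} {s : Finset α} {f : α → ℝ}
    (h : ∀ a ∈ s, f a ≤ 0) {a₀ : α} (ha : a₀ ∈ s) : ∑ a ∈ s, f a ≤ f a₀ := by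
  classical
  rw [← Finset.sum_erase_add s f ha]
  have h2 : ∑ a ∈ s.erase a₀, f a ≤ 0 :=
    Finset.sum_nonpos (fun a hm => h a (Finset.mem_of_mem_erase hm))
  linarith

lemma log_key' {A B : ℝ} (hA : 0 < A) (hB : 0 < B) :
    (Real.log B - Real.log A) * (A - B) ≤ 0 := by
  rcases le_total A B with h | h
  · have := Real.log_le_log hA h
    nlinarith
  · have := Real.log_le_log hB h
    nlinarith

lemma log_key_quant_aux' {A B t δ : ℝ} (hδ : 0 < δ) (hA : 0 < A) (hB : 0 < B)
    (ht : 0 ≤ t) (htB : t ≤ B) (habs : δ ≤ Real.log B - Real.log A) :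
    (Real.log B - Real.log A) * (A - B) ≤ -(δ * (1 - Real.exp (-δ)) * t) := by
  have he : Real.exp (-δ) < 1 := by
    rw [Real.exp_lt_one_iff]; linarith
  have hBA : A ≤ Real.exp (-δ) * B := by
    have h1 : Real.exp (δ + Real.log A) ≤ Real.exp (Real.log B) :=
      Real.exp_le_exp.mpr (by linarith)
    rw [Real.exp_add, Real.exp_log hA, Real.exp_log hB] at h1
    calc A = Real.exp (-δ) * (Real.exp δ * A) := by
            rw [← mul_assoc, ← Real.exp_add]; simp
      _ ≤ Real.exp (-δ) * B := mul_le_mul_of_nonneg_left h1 (Real.exp_nonneg _)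
  have hdiff : (1 - Real.exp (-δ)) * t ≤ B - A := by nlinarith
  have hmul : δ * ((1 - Real.exp (-δ)) * t) ≤ (Real.log B - Real.log A) * (B - A) :=
    mul_le_mul habs hdiff (by nlinarith) (by linarith)
  nlinarith

lemma log_key_quant' {A B t δ : ℝ} (hδ : 0 < δ) (hA : 0 < A) (hB : 0 < B)
    (ht : 0 ≤ t) (hmax : t ≤ max A B) (hχ : δ ≤ |Real.log B - Real.log A|) :
    (Real.log B - Real.log A) * (A - B) ≤ -(δ * (1 - Real.exp (-δ)) * t) := by
  rcases le_abs.mp hχ with h | h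
  · have hAB : A ≤ B := by
      have hlt : Real.log A < Real.log B := by linarith
      by_contra hc
      push_neg at hc
      exact absurd (Real.log_le_log hB hc.le) (not_le.mpr hlt)
    exact log_key_quant_aux' hδ hA hB ht (by rwa [max_eq_right hAB] at hmax) h
  · have h' : δ ≤ Real.log A - Real.log B := by linarith
    have hBA : B ≤ A := by
      have hlt : Real.log B < Real.log A := by linarith
      by_contra hc
      push_neg at hc
      exact absurd (Real.log_le_log hA hc.le) (not_le.mpr hlt)
    have := log_key_quant_aux' hδ hB hA ht (by rwa [max_eq_left hBA] at hmax) h'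
    nlinarith

lemma xi_pair_eq' {I : Type*} [Fintype I] [DecidableEq I]
    (Kbar : Finset (I → ℕ)) (μ : I → ℝ) (a : ℝ) (x : (I → ℕ) → ℝ) (k k' : I → ℕ) (i : I) :
    xiDef Kbar μ a x k k' i + xiDef Kbar μ a x k' k i =
      (Real.log ((k' i : ℝ) * xeDef a x (k - Pi.single i 1) * xeDef a x k')
        - Real.log ((k i : ℝ) * xeDef a x k * xeDef a x (k' - Pi.single i 1)))
      * (((k i : ℝ) * xeDef a x k * xeDef a x (k' - Pi.single i 1))
        - ((k' i : ℝ) * xeDef a x (k - Pi.single i 1) * xeDef a x k'))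
      * (μ i / (-Real.log a) / xIdxDef Kbar a x i) := by
  unfold xiDef chiDef
  rw [show (k i : ℝ) * xeDef a x (k' - Pi.single i 1) * xeDef a x k
        = (k i : ℝ) * xeDef a x k * xeDef a x (k' - Pi.single i 1) by ring,
     show (k' i : ℝ) * xeDef a x k' * xeDef a x (k - Pi.single i 1)
        = (k' i : ℝ) * xeDef a x (k - Pi.single i 1) * xeDef a x k' by ring]
  ring

lemma prod_lower' {q u v K : ℝ} (hq : 0 ≤ q) (hu : q ≤ u) (hv : q ≤ v) (hK : 1 ≤ K) :
    q * q ≤ K * u * v := by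
  have h1 : q * q ≤ u * v := mul_le_mul hu hv hq (hq.trans hu)
  have h2 : u * v ≤ K * (u * v) :=
    le_mul_of_one_le_left (mul_nonneg (hq.trans hu) (hq.trans hv)) hK
  calc q * q ≤ u * v := h1
    _ ≤ K * (u * v) := h2
    _ = K * u * v := (mul_assoc K u v).symm

lemma sub_single_ne_zero' {I : Type*} [Fintype I] [DecidableEq I] {k : I → ℕ} {i : I}
    (h1 : 1 ≤ k i) (hne : k ≠ Pi.single i 1) : k - Pi.single i 1 ≠ 0 := by
  intro h
  apply hne
  funext j
  have hj := congrFun h j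
  simp only [Pi.sub_apply, Pi.zero_apply] at hj
  by_cases hji : j = i
  · subst hji; simp only [Pi.single_eq_same] at hj ⊢; omega
  · simp only [Pi.single_eq_of_ne hji] at hj ⊢; omega

lemma chi_self_eq_zero' {I : Type*} [Fintype I] [DecidableEq I]
    (a : ℝ) (x : (I → ℕ) → ℝ) (k : I → ℕ) (i : I) :
    chiDef a x k k i = 0 := by
  unfold chiDef
  rw [show (k i : ℝ) * xeDef a x (k - Pi.single i 1) * xeDef a x k
        = (k i : ℝ) * xeDef a x k * xeDef a x (k - Pi.single i 1) by ring]
  exact sub_self _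

set_option maxHeartbeats 1000000

/-- the negative-drift bound (eq-conc2) for `Ξ`: with `a = r^{p−1}`,
if `x_k ≥ c r^{s−1}` on `K`, `x` nearly satisfies the conservation laws, and `|χ| ≥ δ`
for at least one pair of edges, then `Ξ(x) ≤ −C r^{2(s−1)}/log r` for a constant `C > 0`
and all sufficiently large `r`; in particular `Ξ(x) < −r^{2s−2−ε}` for all sufficiently
large `r`. -/
theorem Xi_negative_drift
    {I : Type*} [Fintype I] [DecidableEq I] [Nonempty I]
    (Kbar : Finset (I → ℕ))
    (h0 : (0 : I → ℕ) ∈ Kbar)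
    (hunit : ∀ i : I, Pi.single i 1 ∈ Kbar)
    (hmono : ∀ k ∈ Kbar, ∀ k' : I → ℕ, (∀ i, k' i ≤ k i) → k' ∈ Kbar)
    (ρ : I → ℝ) (hρ : ∀ i, 0 < ρ i)
    (μ : I → ℝ) (hμ : ∀ i, 0 < μ i)
    (p s ε c δ : ℝ) (hp : p ∈ Set.Ioo (0 : ℝ) 1) (hs : s ∈ Set.Ioo (0 : ℝ) 1)
    (hε : ε ∈ Set.Ioo (0 : ℝ) (1/2)) (hc : 0 < c) (hδ : 0 < δ) :
    ∃ C > (0 : ℝ),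
      (∃ r₀ : ℝ, ∀ r : ℝ, r₀ ≤ r →
        ∀ x : (I → ℕ) → ℝ,
          (∀ k ∈ Kbar.erase 0, c * r ^ (s - 1) ≤ x k) →
          (∀ i : I, |∑ k ∈ Kbar.erase 0, (k i : ℝ) * x k - ρ i| ≤
            r ^ (-(1 : ℝ)/2 + ε) / (Fintype.card I : ℝ)) →
          (∃ i : I, ∃ k ∈ edgesF Kbar i, ∃ k' ∈ edgesF Kbar i,
            δ ≤ |chiDef (r ^ (p - 1)) x k k' i|) →
          XiDef Kbar μ (r ^ (p - 1)) x ≤ -C * r ^ (2 * (s - 1)) / Real.log r) ∧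
      (∃ r₁ : ℝ, ∀ r : ℝ, r₁ ≤ r →
        ∀ x : (I → ℕ) → ℝ,
          (∀ k ∈ Kbar.erase 0, c * r ^ (s - 1) ≤ x k) →
          (∀ i : I, |∑ k ∈ Kbar.erase 0, (k i : ℝ) * x k - ρ i| ≤
            r ^ (-(1 : ℝ)/2 + ε) / (Fintype.card I : ℝ)) →
          (∃ i : I, ∃ k ∈ edgesF Kbar i, ∃ k' ∈ edgesF Kbar i,
            δ ≤ |chiDef (r ^ (p - 1)) x k k' i|) →
          XiDef Kbar μ (r ^ (p - 1)) x < -(r ^ (2 * s - 2 - ε))) := by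
  obtain ⟨hp0, hp1⟩ := hp
  obtain ⟨hs0, hs1⟩ := hs
  obtain ⟨hε0, hε1⟩ := hε
  have hne : (Finset.univ : Finset I).Nonempty := Finset.univ_nonempty
  set μmin : ℝ := Finset.univ.inf' hne μ with hμmindef
  have hμmin0 : 0 < μmin := by
    rw [hμmindef, Finset.lt_inf'_iff]
    exact fun i _ => hμ i
  set M : ℝ := ∑ j : I, (ρ j + 1) with hMdef
  have hM0 : 0 < M := Finset.sum_pos (fun j _ => by linarith [hρ j]) hne
  set Xbar : ℝ := 1 + ((Kbar.erase 0).card : ℝ) * M with hXbardef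
  have hXbar0 : 0 < Xbar := by positivity
  have hexpδ : Real.exp (-δ) < 1 := by rw [Real.exp_lt_one_iff]; linarith
  set C : ℝ := μmin * δ * (1 - Real.exp (-δ)) * c ^ 2 / (2 * (1 - p) * Xbar) with hCdef
  have hC0 : 0 < C := by
    apply div_pos
    · have h1 : 0 < 1 - Real.exp (-δ) := by linarith
      positivity
    · have h2 : 0 < 1 - p := by linarith
      positivity
  clear_value μmin M Xbar C
  have key : ∀ r : ℝ, 2 ≤ r →
      ∀ x : (I → ℕ) → ℝ,
        (∀ k ∈ Kbar.erase 0, c * r ^ (s - 1) ≤ x k) →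
        (∀ i : I, |∑ k ∈ Kbar.erase 0, (k i : ℝ) * x k - ρ i| ≤
          r ^ (-(1 : ℝ)/2 + ε) / (Fintype.card I : ℝ)) →
        (∃ i : I, ∃ k ∈ edgesF Kbar i, ∃ k' ∈ edgesF Kbar i,
          δ ≤ |chiDef (r ^ (p - 1)) x k k' i|) →
        XiDef Kbar μ (r ^ (p - 1)) x ≤ -C * r ^ (2 * (s - 1)) / Real.log r := by
    intro r hr2 x hx hcons hbad
    obtain ⟨i₀, k₀, hk₀, k'₀, hk'₀, hχ⟩ := hbad
    have hr0 : (0:ℝ) < r := by linarith only [hr2]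
    have hr1 : (1:ℝ) < r := by linarith only [hr2]
    set a : ℝ := r ^ (p - 1) with hadef
    have ha0 : 0 < a := by
      rw [hadef]; exact Real.rpow_pos_of_pos hr0 _
    have ha1 : a ≤ 1 := by
      rw [hadef]; exact Real.rpow_le_one_of_one_le_of_nonpos hr1.le (by linarith only [hp1])
    have hlogr : 0 < Real.log r := Real.log_pos hr1
    have hloga : Real.log a = (p - 1) * Real.log r := by
      rw [hadef]; exact Real.log_rpow hr0 _
    clear_value a
    have hb0 : 0 < -Real.log a := by
      rw [hloga]; nlinarith only [hlogr, hp1]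
    have hq0 : 0 < c * r ^ (s - 1) := mul_pos hc (Real.rpow_pos_of_pos hr0 _)
    have hxpos : ∀ k ∈ Kbar.erase 0, 0 < x k := fun k hk => lt_of_lt_of_le hq0 (hx k hk)
    -- upper bound on x on K
    have hxM : ∀ m ∈ Kbar.erase 0, x m ≤ M := by
      intro m hm
      have hm0 : m ≠ 0 := (Finset.mem_erase.mp hm).1
      obtain ⟨j, hj⟩ : ∃ j, m j ≠ 0 := by
        by_contra h
        push_neg at h
        exact hm0 (funext fun j => h j)
      have h1 : x m ≤ (m j : ℝ) * x m :=
        le_mul_of_one_le_left (hxpos m hm).le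
          (by exact_mod_cast Nat.one_le_iff_ne_zero.mpr hj)
      have h2 : (m j : ℝ) * x m ≤ ∑ k ∈ Kbar.erase 0, (k j : ℝ) * x k :=
        Finset.single_le_sum (f := fun k => (k j : ℝ) * x k)
          (fun k hk => mul_nonneg (Nat.cast_nonneg _) (hxpos k hk).le) hm
      have hcard1 : (1:ℝ) ≤ (Fintype.card I : ℝ) := by
        exact_mod_cast Fintype.card_pos
      have hsmall : r ^ (-(1:ℝ)/2 + ε) / (Fintype.card I : ℝ) ≤ 1 := by
        have h5 : r ^ (-(1:ℝ)/2 + ε) ≤ 1 :=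
          Real.rpow_le_one_of_one_le_of_nonpos hr1.le (by linarith only [hε1])
        exact div_le_one_of_le₀ (h5.trans hcard1) (by linarith only [hcard1])
      have h3 : ∑ k ∈ Kbar.erase 0, (k j : ℝ) * x k ≤ ρ j + 1 := by
        have habs := abs_le.mp ((hcons j).trans hsmall)
        linarith only [habs.2]
      have h4 : ρ j + 1 ≤ M := by
        rw [hMdef]
        exact Finset.single_le_sum (f := fun j => ρ j + 1)
          (fun j _ => by show (0:ℝ) ≤ ρ j + 1; linarith only [hρ j])
          (Finset.mem_univ j)
      linarith only [h1, h2, h3, h4]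
    -- bounds on xIdxDef
    have hXpos : ∀ i, 0 < xIdxDef Kbar a x i := by
      intro i
      unfold xIdxDef
      have h1 : 0 ≤ ∑ m ∈ (Kbar.erase 0).filter
          (fun m => m + Pi.single i 1 ∈ Kbar.erase 0), x m :=
        Finset.sum_nonneg (fun m hm => (hxpos m (Finset.mem_of_mem_filter m hm)).le)
      linarith only [h1, ha0]
    have hXle : ∀ i, xIdxDef Kbar a x i ≤ Xbar := by
      intro i
      unfold xIdxDef
      have h1 : ∑ m ∈ (Kbar.erase 0).filter
          (fun m => m + Pi.single i 1 ∈ Kbar.erase 0), x m ≤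
          ((Kbar.erase 0).filter (fun m => m + Pi.single i 1 ∈ Kbar.erase 0)).card • M :=
        Finset.sum_le_card_nsmul _ _ M (fun m hm => hxM m (Finset.mem_of_mem_filter m hm))
      rw [nsmul_eq_mul] at h1
      have h2 : (((Kbar.erase 0).filter
          (fun m => m + Pi.single i 1 ∈ Kbar.erase 0)).card : ℝ) ≤ ((Kbar.erase 0).card : ℝ) := by
        exact_mod_cast Finset.card_le_card (Finset.filter_subset _ _)
      have h3 : (((Kbar.erase 0).filter
          (fun m => m + Pi.single i 1 ∈ Kbar.erase 0)).card : ℝ) * M ≤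
          ((Kbar.erase 0).card : ℝ) * M := mul_le_mul_of_nonneg_right h2 hM0.le
      rw [hXbardef]
      linarith only [h1, h3, ha1]
    -- edge facts
    have hedgex : ∀ i : I, ∀ k ∈ edgesF Kbar i,
        xeDef a x k = x k ∧ c * r ^ (s - 1) ≤ xeDef a x k ∧ 0 < xeDef a x (k - Pi.single i 1)
          ∧ (1:ℝ) ≤ (k i : ℝ) := by
      intro i k hk
      have hmem := Finset.mem_filter.mp hk
      have hk0 : k ≠ 0 := (Finset.mem_erase.mp hmem.1).1
      have hxe : xeDef a x k = x k := by simp [xeDef, hk0]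
      refine ⟨hxe, ?_, ?_, ?_⟩
      · rw [hxe]; exact hx k hmem.1
      · by_cases hz : k - Pi.single i 1 = 0
        · simp [xeDef, hz, ha0]
        · have hmem2 : k - Pi.single i 1 ∈ Kbar.erase 0 :=
            Finset.mem_erase.mpr ⟨hz, hmem.2.2⟩
          simp only [xeDef, if_neg hz]
          exact hxpos _ hmem2
      · exact_mod_cast hmem.2.1
    -- positivity of the chi arguments
    have hABpos : ∀ i : I, ∀ k ∈ edgesF Kbar i, ∀ k' ∈ edgesF Kbar i,
        0 < (k i : ℝ) * xeDef a x k * xeDef a x (k' - Pi.single i 1) := by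
      intro i k hk k' hk'
      obtain ⟨-, hxk, -, hki⟩ := hedgex i k hk
      obtain ⟨-, -, hxk'e, -⟩ := hedgex i k' hk'
      have h1 : 0 < xeDef a x k := lt_of_lt_of_le hq0 hxk
      exact mul_pos (mul_pos (lt_of_lt_of_le zero_lt_one hki) h1) hxk'e
    -- pair nonpositivity
    have hpair : ∀ i : I, ∀ k ∈ edgesF Kbar i, ∀ k' ∈ edgesF Kbar i,
        xiDef Kbar μ a x k k' i + xiDef Kbar μ a x k' k i ≤ 0 := by
      intro i k hk k' hk'
      rw [xi_pair_eq']
      have hA := hABpos i k hk k' hk'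
      obtain ⟨-, hxk', -, hki'⟩ := hedgex i k' hk'
      obtain ⟨-, -, hxke, -⟩ := hedgex i k hk
      have hB' : 0 < (k' i : ℝ) * xeDef a x (k - Pi.single i 1) * xeDef a x k' :=
        mul_pos (mul_pos (lt_of_lt_of_le zero_lt_one hki') hxke) (lt_of_lt_of_le hq0 hxk')
      have hkey := log_key' hA hB'
      have hD : 0 ≤ μ i / (-Real.log a) / xIdxDef Kbar a x i := by
        have := hμ i
        have := hXpos i
        positivity
      have hfin := mul_le_mul_of_nonneg_right hkey hD
      linarith only [hfin]
    -- single sum domination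
    have hSnonpos : ∀ i : I,
        (∑ k ∈ edgesF Kbar i, ∑ k' ∈ edgesF Kbar i, xiDef Kbar μ a x k k' i) ≤ 0 := by
      intro i
      have hdouble : ∑ k ∈ edgesF Kbar i, ∑ k' ∈ edgesF Kbar i,
          (xiDef Kbar μ a x k k' i + xiDef Kbar μ a x k' k i)
          = 2 * ∑ k ∈ edgesF Kbar i, ∑ k' ∈ edgesF Kbar i, xiDef Kbar μ a x k k' i := by
        simp only [Finset.sum_add_distrib]
        rw [show (∑ k ∈ edgesF Kbar i, ∑ k' ∈ edgesF Kbar i, xiDef Kbar μ a x k' k i)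
              = ∑ k ∈ edgesF Kbar i, ∑ k' ∈ edgesF Kbar i, xiDef Kbar μ a x k k' i
            from Finset.sum_comm]
        ring
      have h1 : ∑ k ∈ edgesF Kbar i, ∑ k' ∈ edgesF Kbar i,
          (xiDef Kbar μ a x k k' i + xiDef Kbar μ a x k' k i) ≤ 0 :=
        Finset.sum_nonpos (fun k hk => Finset.sum_nonpos (fun k' hk' => hpair i k hk k' hk'))
      linarith only [hdouble, h1]
    -- Xi ≤ S i₀
    have hXi1 : XiDef Kbar μ a x ≤
        ∑ k ∈ edgesF Kbar i₀, ∑ k' ∈ edgesF Kbar i₀, xiDef Kbar μ a x k k' i₀ := by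
      unfold XiDef
      exact sum_le_of_mem' (fun i _ => hSnonpos i) (Finset.mem_univ i₀)
    -- 2 * S i₀ ≤ bad pair
    have hdouble₀ : ∑ k ∈ edgesF Kbar i₀, ∑ k' ∈ edgesF Kbar i₀,
        (xiDef Kbar μ a x k k' i₀ + xiDef Kbar μ a x k' k i₀)
        = 2 * ∑ k ∈ edgesF Kbar i₀, ∑ k' ∈ edgesF Kbar i₀, xiDef Kbar μ a x k k' i₀ := by
      simp only [Finset.sum_add_distrib]
      rw [show (∑ k ∈ edgesF Kbar i₀, ∑ k' ∈ edgesF Kbar i₀, xiDef Kbar μ a x k' k i₀)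
            = ∑ k ∈ edgesF Kbar i₀, ∑ k' ∈ edgesF Kbar i₀, xiDef Kbar μ a x k k' i₀
          from Finset.sum_comm]
      ring
    have hbadle : ∑ k ∈ edgesF Kbar i₀, ∑ k' ∈ edgesF Kbar i₀,
        (xiDef Kbar μ a x k k' i₀ + xiDef Kbar μ a x k' k i₀)
        ≤ xiDef Kbar μ a x k₀ k'₀ i₀ + xiDef Kbar μ a x k'₀ k₀ i₀ := by
      refine le_trans (sum_le_of_mem' (fun k hk =>
        Finset.sum_nonpos (fun k' hk' => hpair i₀ k hk k' hk')) hk₀) ?_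
      exact sum_le_of_mem' (fun k' hk' => hpair i₀ k₀ hk₀ k' hk') hk'₀
    -- quantitative bound on the bad pair
    set A : ℝ := (k₀ i₀ : ℝ) * xeDef a x k₀ * xeDef a x (k'₀ - Pi.single i₀ 1) with hAdef
    set B : ℝ := (k'₀ i₀ : ℝ) * xeDef a x (k₀ - Pi.single i₀ 1) * xeDef a x k'₀ with hBdef
    clear_value A B
    have hA0 : 0 < A := by rw [hAdef]; exact hABpos i₀ k₀ hk₀ k'₀ hk'₀
    have hB0 : 0 < B := by
      obtain ⟨-, hxk', -, hki'⟩ := hedgex i₀ k'₀ hk'₀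
      obtain ⟨-, -, hxke, -⟩ := hedgex i₀ k₀ hk₀
      rw [hBdef]
      exact mul_pos (mul_pos (lt_of_lt_of_le zero_lt_one hki') hxke) (lt_of_lt_of_le hq0 hxk')
    set t : ℝ := c ^ 2 * r ^ (2 * (s - 1)) with htdef
    clear_value t
    have ht0 : 0 < t := by
      rw [htdef]
      have := Real.rpow_pos_of_pos hr0 (2 * (s - 1))
      positivity
    have hrsq : r ^ (2 * (s - 1)) = r ^ (s - 1) * r ^ (s - 1) := by
      rw [← Real.rpow_add hr0]; ring_nf
    -- t ≤ max A B
    have hmaxAB : t ≤ max A B := by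
      obtain ⟨hxek₀, hxk₀, hxk₀e, hki₀⟩ := hedgex i₀ k₀ hk₀
      obtain ⟨hxek'₀, hxk'₀, hxk'₀e, hki'₀⟩ := hedgex i₀ k'₀ hk'₀
      have hmemk₀ := Finset.mem_filter.mp hk₀
      have hmemk'₀ := Finset.mem_filter.mp hk'₀
      by_cases hk0e : k₀ = Pi.single i₀ 1
      · by_cases hk'0e : k'₀ = Pi.single i₀ 1
        · exfalso
          rw [hk0e, ← hk'0e, chi_self_eq_zero'] at hχ
          simp only [abs_zero] at hχ
          linarith only [hχ, hδ]
        · -- k'₀ ≠ e, use A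
          have hz : k'₀ - Pi.single i₀ 1 ≠ 0 :=
            sub_single_ne_zero' hmemk'₀.2.1 hk'0e
          have hmem2 : k'₀ - Pi.single i₀ 1 ∈ Kbar.erase 0 :=
            Finset.mem_erase.mpr ⟨hz, hmemk'₀.2.2⟩
          have hxv : c * r ^ (s - 1) ≤ xeDef a x (k'₀ - Pi.single i₀ 1) := by
            simp only [xeDef, if_neg hz]
            exact hx _ hmem2
          have hAge : t ≤ A := by
            rw [hAdef, htdef, hrsq,
              show c ^ 2 * (r ^ (s-1) * r ^ (s-1))
                = (c * r ^ (s-1)) * (c * r ^ (s-1)) by ring]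
            exact prod_lower' hq0.le hxk₀ hxv hki₀
          exact hAge.trans (le_max_left _ _)
      · -- k₀ ≠ e, use B
        have hz : k₀ - Pi.single i₀ 1 ≠ 0 :=
          sub_single_ne_zero' hmemk₀.2.1 hk0e
        have hmem2 : k₀ - Pi.single i₀ 1 ∈ Kbar.erase 0 :=
          Finset.mem_erase.mpr ⟨hz, hmemk₀.2.2⟩
        have hxv : c * r ^ (s - 1) ≤ xeDef a x (k₀ - Pi.single i₀ 1) := by
          simp only [xeDef, if_neg hz]
          exact hx _ hmem2
        have hBge : t ≤ B := by
          rw [hBdef, htdef, hrsq,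
            show c ^ 2 * (r ^ (s-1) * r ^ (s-1))
              = (c * r ^ (s-1)) * (c * r ^ (s-1)) by ring]
          exact prod_lower' hq0.le hxv hxk'₀ hki'₀
        exact hBge.trans (le_max_right _ _)
    have hχ' : δ ≤ |Real.log B - Real.log A| := by
      have heq : chiDef a x k₀ k'₀ i₀ = Real.log B - Real.log A := by
        rw [hAdef, hBdef]; unfold chiDef; rfl
      rwa [heq] at hχ
    have hquant : (Real.log B - Real.log A) * (A - B) ≤ -(δ * (1 - Real.exp (-δ)) * t) :=
      log_key_quant' hδ hA0 hB0 ht0.le hmaxAB hχ'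
    -- D bounds
    set D : ℝ := μ i₀ / (-Real.log a) / xIdxDef Kbar a x i₀ with hDdef
    set Dmin : ℝ := μmin / (-Real.log a) / Xbar with hDmindef
    clear_value D Dmin
    have hDmin0 : 0 < Dmin := by
      rw [hDmindef]
      have := hμmin0
      positivity
    have hDminD : Dmin ≤ D := by
      rw [hDmindef, hDdef, div_div, div_div]
      have hle : μmin ≤ μ i₀ := by
        rw [hμmindef]; exact Finset.inf'_le μ (Finset.mem_univ i₀)
      exact div_le_div₀ (hμ i₀).le hle (mul_pos hb0 (hXpos i₀))
        (mul_le_mul_of_nonneg_left (hXle i₀) hb0.le)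
    have hpairquant : xiDef Kbar μ a x k₀ k'₀ i₀ + xiDef Kbar μ a x k'₀ k₀ i₀ ≤
        -(δ * (1 - Real.exp (-δ)) * t) * Dmin := by
      rw [xi_pair_eq', ← hAdef, ← hBdef, ← hDdef]
      have hLAB : (Real.log B - Real.log A) * (A - B) ≤ 0 := log_key' hA0 hB0
      calc (Real.log B - Real.log A) * (A - B) * D
          ≤ (Real.log B - Real.log A) * (A - B) * Dmin := by
            exact mul_le_mul_of_nonpos_left hDminD hLAB
        _ ≤ -(δ * (1 - Real.exp (-δ)) * t) * Dmin :=
            mul_le_mul_of_nonneg_right hquant hDmin0.le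
    -- put everything together
    have hfinal_eq : -(δ * (1 - Real.exp (-δ)) * t) * Dmin / 2
        = -C * r ^ (2 * (s - 1)) / Real.log r := by
      rw [hDmindef, htdef, hCdef]
      rw [show -Real.log a = (1 - p) * Real.log r by rw [hloga]; ring]
      have h1p : (1 : ℝ) - p ≠ 0 := by
        have : (0:ℝ) < 1 - p := by linarith only [hp1]
        exact ne_of_gt this
      have h2p : Real.log r ≠ 0 := ne_of_gt hlogr
      have h3p : Xbar ≠ 0 := ne_of_gt hXbar0
      field_simp
    rw [← hfinal_eq]
    linarith only [hpairquant, hXi1, hdouble₀, hbadle]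
  refine ⟨C, hC0, ⟨2, key⟩, ?_⟩
  -- second part
  have hlo : Filter.Tendsto (fun r : ℝ => Real.log r / r ^ ε) Filter.atTop (nhds 0) := by
    have := isLittleO_log_rpow_atTop hε0
    exact this.tendsto_div_nhds_zero
  have hev : ∀ᶠ r : ℝ in Filter.atTop, Real.log r / r ^ ε < C :=
    hlo.eventually_lt_const hC0
  obtain ⟨R, hR⟩ := Filter.eventually_atTop.mp hev
  refine ⟨max 2 R, fun r hr x hx hcons hbad => ?_⟩
  have hr2 : 2 ≤ r := le_trans (le_max_left _ _) hr
  have hrR : R ≤ r := le_trans (le_max_right _ _) hr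
  have h1 := key r hr2 x hx hcons hbad
  have hr0 : (0:ℝ) < r := by linarith only [hr2]
  have hr1 : (1:ℝ) < r := by linarith only [hr2]
  have hlogr : 0 < Real.log r := Real.log_pos hr1
  have hre0 : 0 < r ^ ε := Real.rpow_pos_of_pos hr0 _
  have hγ : 0 < r ^ (2*(s-1)) := Real.rpow_pos_of_pos hr0 _
  have hne0 : 0 < r ^ (-ε) := Real.rpow_pos_of_pos hr0 _
  have hlt2 : Real.log r < C * r ^ ε := (div_lt_iff₀ hre0).mp (hR r hrR)
  have heq : r ^ (2*s-2-ε) = r ^ (2*(s-1)) * r ^ (-ε) := by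
    rw [show 2*s-2-ε = 2*(s-1) + (-ε) by ring, Real.rpow_add hr0]
  have hid : r ^ ε * r ^ (-ε) = 1 := by
    rw [← Real.rpow_add hr0]; simp
  have hfin : -C * r ^ (2*(s-1)) / Real.log r < -(r ^ (2*s-2-ε)) := by
    rw [heq, div_lt_iff₀ hlogr]
    have hpos : 0 < r ^ (2*(s-1)) * r ^ (-ε) := mul_pos hγ hne0
    have h3 : r ^ (2*(s-1)) * r ^ (-ε) * (C * r ^ ε) = C * r ^ (2*(s-1)) := by
      rw [show r ^ (2*(s-1)) * r ^ (-ε) * (C * r ^ ε)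
            = C * (r ^ ε * r ^ (-ε)) * r ^ (2*(s-1)) by ring, hid]
      ring
    nlinarith only [mul_lt_mul_of_pos_left hlt2 hpos, h3]
  exact lt_of_le_of_lt h1 hfin
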